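/- arXiv:2004.13409 — 2 statements merged into one kernel-verified Lean document; each statement's English description precedes it below -/
import Mathlib

section
/- Let λ > 0, a ∈ (0,2), and n ≥ 1 a natural number. Then ∫_0^1 exp(−(1+a(x−1/2))λ) · ((1+a(x−1/2))λ)^{n−1}/(n−1)! dx = (e^{−λ} λ^{n−1}/(n−1)!) · g(n−1), where g(m) = (1/a)·Σ_{j=0}^{m} λ^{−(j+1)} (m!/(m−j)!) ( e^{λa/2}(1−a/2)^{m−j} − e^{−λa/2}(1+a/2)^{m−j} ). -/
/-- The factor `g(m)` from the linear-approximation model of the URW exit probability. -/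
noncomputable def gFactor (lam a : ℝ) (m : ℕ) : ℝ :=
  (1 / a) * ∑ j ∈ Finset.range (m + 1),
    lam ^ (-(j + 1 : ℤ)) * ((m.factorial : ℝ) / (m - j).factorial) *
      (Real.exp (lam * a / 2) * (1 - a / 2) ^ (m - j)
        - Real.exp (-(lam * a / 2)) * (1 + a / 2) ^ (m - j))

noncomputable def polySum (m : ℕ) (u : ℝ) : ℝ :=
  ∑ j ∈ Finset.range (m + 1), ((m.factorial : ℝ) / (m - j).factorial) * u ^ (m - j)

lemma polySum_succ (m : ℕ) (u : ℝ) :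
    polySum (m + 1) u = u ^ (m + 1) + (m + 1) * polySum m u := by
  unfold polySum
  rw [Finset.sum_range_succ']
  have h0 : ((m + 1).factorial : ℝ) / (m + 1 - 0).factorial * u ^ (m + 1 - 0) = u ^ (m + 1) := by
    rw [Nat.sub_zero, div_self (by exact_mod_cast (m+1).factorial_ne_zero), one_mul]
  rw [h0, Finset.mul_sum, add_comm]
  congr 1
  refine Finset.sum_congr rfl fun j hj => ?_
  have h1 : m + 1 - (j + 1) = m - j := by omega
  rw [h1, Nat.factorial_succ]
  push_cast
  ring

lemma hasDerivAt_negExpPoly (m : ℕ) (u : ℝ) :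
    HasDerivAt (fun v => -(Real.exp (-v) * polySum m v)) (Real.exp (-u) * u ^ m) u := by
  induction m generalizing u with
  | zero =>
      have h : HasDerivAt (fun v : ℝ => -Real.exp (-v)) (Real.exp (-u)) u := by
        have := ((hasDerivAt_neg u).exp).neg
        simp only [mul_neg, mul_one, neg_neg] at this
        exact this
      simpa [polySum] using h
  | succ m ih =>
      have hexp : HasDerivAt (fun v : ℝ => Real.exp (-v)) (-Real.exp (-u)) u := by
        simpa using (hasDerivAt_neg u).exp
      have hpow : HasDerivAt (fun v : ℝ => v ^ (m + 1)) ((m + 1) * u ^ m) u := by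
        simpa using hasDerivAt_pow (m + 1) u
      have h1 : HasDerivAt (fun v : ℝ => -(Real.exp (-v) * v ^ (m + 1)))
          (Real.exp (-u) * u ^ (m + 1) - Real.exp (-u) * ((m + 1) * u ^ m)) u := by
        have : HasDerivAt (fun v : ℝ => -(Real.exp (-v) * v ^ (m + 1))) _ u := (hexp.mul hpow).neg
        convert this using 1
        ring
      have h2 : HasDerivAt (fun v : ℝ => (m + 1 : ℝ) * -(Real.exp (-v) * polySum m v))
          ((m + 1 : ℝ) * (Real.exp (-u) * u ^ m)) u := (ih u).const_mul _
      have h : HasDerivAt (fun v : ℝ => -(Real.exp (-v) * v ^ (m + 1))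
            + (m + 1 : ℝ) * -(Real.exp (-v) * polySum m v)) _ u := h1.add h2
      have heq : (fun v : ℝ => -(Real.exp (-v) * v ^ (m + 1))
            + (m + 1 : ℝ) * -(Real.exp (-v) * polySum m v))
          = fun v => -(Real.exp (-v) * polySum (m + 1) v) := by
        funext v
        rw [polySum_succ]
        ring
      rw [heq] at h
      convert h using 1
      ring

lemma key (lam a : ℝ) (hlam : 0 < lam) (ha : 0 < a) (m : ℕ) :
    (∫ x in (0:ℝ)..1,
        Real.exp (-((1 + a * (x - 1 / 2)) * lam)) * ((1 + a * (x - 1 / 2)) * lam) ^ m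
          / m.factorial) =
      (Real.exp (-lam) * lam ^ m / m.factorial) * gFactor lam a m := by
  have hla : a * lam ≠ 0 := by positivity
  have hm : (m.factorial : ℝ) ≠ 0 := by exact_mod_cast m.factorial_ne_zero
  set w : ℝ → ℝ := fun x => (1 + a * (x - 1 / 2)) * lam with hw
  set G : ℝ → ℝ := fun x => -(Real.exp (-(w x)) * polySum m (w x)) / (a * lam * m.factorial)
    with hG
  have hwderiv : ∀ x : ℝ, HasDerivAt w (a * lam) x := by
    intro x
    have : HasDerivAt (fun x : ℝ => (1 + a * (x - 1 / 2)) * lam) (a * lam) x := by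
      have h : HasDerivAt (fun x : ℝ => 1 + a * (x - 1 / 2)) a x := by
        have h0 := (((hasDerivAt_id x).sub_const (1/2)).const_mul a).const_add 1
        simp only [id, mul_one] at h0
        exact h0
      simpa using h.mul_const lam
    simpa [hw] using this
  have hGderiv : ∀ x : ℝ, HasDerivAt G
      (Real.exp (-(w x)) * (w x) ^ m / m.factorial) x := by
    intro x
    have h : HasDerivAt G _ x := ((hasDerivAt_negExpPoly m (w x)).comp x (hwderiv x)).div_const
      (a * lam * m.factorial)
    convert h using 1
    field_simp
  have hcont : Continuous fun x : ℝ => Real.exp (-(w x)) * (w x) ^ m / m.factorial := by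
    fun_prop
  have hint := intervalIntegral.integral_eq_sub_of_hasDerivAt
    (f := G) (f' := fun x => Real.exp (-(w x)) * (w x) ^ m / m.factorial)
    (fun x _ => hGderiv x) (hcont.intervalIntegrable 0 1)
  have hintegrand : (∫ x in (0:ℝ)..1,
        Real.exp (-((1 + a * (x - 1 / 2)) * lam)) * ((1 + a * (x - 1 / 2)) * lam) ^ m
          / m.factorial)
      = ∫ x in (0:ℝ)..1, Real.exp (-(w x)) * (w x) ^ m / m.factorial := by
    simp [hw]
  rw [hintegrand, hint]
  -- now pure algebra
  have hw1 : w 1 = (1 + a / 2) * lam := by simp only [hw]; norm_num; exact Or.inl (by ring)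
  have hw0 : w 0 = (1 - a / 2) * lam := by simp only [hw]; norm_num; exact Or.inl (by ring)
  rw [hG]
  simp only [hw1, hw0]
  unfold gFactor polySum
  rw [div_sub_div_same]
  simp only [Finset.mul_sum]
  rw [neg_sub_neg, ← Finset.sum_sub_distrib, Finset.sum_div]
  refine Finset.sum_congr rfl fun j hj => ?_
  have hjm : j ≤ m := by
    have := Finset.mem_range.mp hj; omega
  have hz : lam ^ (-(j + 1 : ℤ)) = (lam ^ (j + 1))⁻¹ := by
    rw [show (-(j + 1 : ℤ)) = -((j + 1 : ℕ) : ℤ) by push_cast; ring, zpow_neg, zpow_natCast]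
  have hlampow : lam ^ m = lam ^ (m - j) * lam ^ j := by
    rw [← pow_add, Nat.sub_add_cancel hjm]
  have hmj : ((m - j).factorial : ℝ) ≠ 0 := by exact_mod_cast (m - j).factorial_ne_zero
  have he1 : Real.exp (-((1 - a / 2) * lam)) = Real.exp (-lam) * Real.exp (lam * a / 2) := by
    rw [← Real.exp_add]; ring_nf
  have he2 : Real.exp (-((1 + a / 2) * lam)) = Real.exp (-lam) * Real.exp (-(lam * a / 2)) := by
    rw [← Real.exp_add]; ring_nf
  rw [hz, hlampow, he1, he2, mul_pow, mul_pow]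
  have hlamne : lam ≠ 0 := ne_of_gt hlam
  have hane : a ≠ 0 := ne_of_gt ha
  field_simp
  ring

/-- P_URW(n) = P_U(n) · g(n-1) for the linear exit-probability profile e(x) = 1 + a(x - 1/2). -/
theorem stmt_2 (lam a : ℝ) (hlam : 0 < lam) (ha : 0 < a) (ha2 : a < 2)
    (n : ℕ) (hn : 1 ≤ n) :
    (∫ x in (0:ℝ)..1,
        Real.exp (-((1 + a * (x - 1 / 2)) * lam)) * ((1 + a * (x - 1 / 2)) * lam) ^ (n - 1)
          / (n - 1).factorial) =
      (Real.exp (-lam) * lam ^ (n - 1) / (n - 1).factorial) * gFactor lam a (n - 1) := by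
  exact key lam a hlam ha (n - 1)
end

section
/- Let λ > 0, a ∈ (0,2), and n ≥ 1 a natural number. Then ∫_0^1 exp(−(1+a(x−1/2))λ) · ((1+a(x−1/2))λ)^{n−1}/(n−1)! · (1+a(x−1/2)) dx = (e^{−λ} λ^{n−1}/(n−1)!) · g(n), where g(m) = (1/a)·Σ_{j=0}^{m} λ^{−(j+1)} (m!/(m−j)!) ( e^{λa/2}(1−a/2)^{m−j} − e^{−λa/2}(1+a/2)^{m−j} ). -/
lemma aux_sum (k : ℕ) (u : ℝ) :
    ∑ j ∈ Finset.range (k+2),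
      ((k+1).factorial : ℝ)/((k+1-j).factorial) * (((k+1-j : ℕ) : ℝ) * u^(k+1-j-1))
    = (∑ j ∈ Finset.range (k+2), ((k+1).factorial : ℝ)/((k+1-j).factorial) * u^(k+1-j)) - u^(k+1) := by
  rw [Finset.sum_range_succ]
  rw [Finset.sum_range_succ' (fun j => ((k+1).factorial : ℝ)/((k+1-j).factorial) * u^(k+1-j)) (k+1)]
  simp only [Nat.sub_self, Nat.cast_zero, zero_mul, mul_zero, add_zero, Nat.sub_zero]
  rw [div_self (by positivity : ((k+1).factorial : ℝ) ≠ 0), one_mul]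
  rw [add_sub_cancel_right]
  refine Finset.sum_congr rfl fun j hj => ?_
  have hj' : j ≤ k := by simpa [Nat.lt_succ_iff] using hj
  have h1 : k + 1 - j = (k - j) + 1 := by omega
  have h2 : k + 1 - (j + 1) = k - j := by omega
  rw [h1, h2, Nat.add_sub_cancel, Nat.factorial_succ (k-j), Nat.cast_mul]
  rw [div_mul_eq_mul_div, div_mul_eq_mul_div,
    div_eq_div_iff (by positivity) (by positivity)]
  ring

/-- Unnormalized numerator of P*_URW(n): weighting the Poisson mass by the exit probability
e(x) = 1 + a(x - 1/2) gives P_U(n) · g(n). -/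
theorem stmt_7 (lam a : ℝ) (hlam : 0 < lam) (ha : 0 < a) (ha2 : a < 2)
    (n : ℕ) (hn : 1 ≤ n) :
    (∫ x in (0:ℝ)..1,
        Real.exp (-((1 + a * (x - 1 / 2)) * lam)) * ((1 + a * (x - 1 / 2)) * lam) ^ (n - 1)
          / (n - 1).factorial * (1 + a * (x - 1 / 2))) =
      (Real.exp (-lam) * lam ^ (n - 1) / (n - 1).factorial) * gFactor lam a n := by
  obtain ⟨k, rfl⟩ : ∃ k, n = k + 1 := ⟨n - 1, by omega⟩
  simp only [Nat.add_sub_cancel]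
  have hlne : lam ≠ 0 := ne_of_gt hlam
  have hane : a ≠ 0 := ne_of_gt ha
  have hkf : (k.factorial : ℝ) ≠ 0 := by positivity
  set c : ℝ := a * lam^2 * k.factorial with hc
  have hcne : c ≠ 0 := by positivity
  have key := intervalIntegral.integral_eq_sub_of_hasDerivAt
    (f := fun x : ℝ => -(Real.exp (-((1 + a*(x - 1/2))*lam)) *
      ∑ j ∈ Finset.range (k+2),
        ((k+1).factorial : ℝ)/((k+1-j).factorial) * ((1 + a*(x - 1/2))*lam)^(k+1-j)) / c)
    (f' := fun x : ℝ => Real.exp (-((1 + a*(x - 1/2))*lam)) * ((1 + a*(x - 1/2))*lam)^k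
      / k.factorial * (1 + a*(x - 1/2)))
    (a := 0) (b := 1)
    ?hd ?hi
  case hd =>
    intro x _
    have hU : HasDerivAt (fun x : ℝ => (1 + a*(x - 1/2))*lam) (a*lam) x := by
      have h := ((((hasDerivAt_id x).sub_const (1/2)).const_mul a).const_add 1).mul_const lam
      simpa using h
    set u : ℝ := (1 + a*(x - 1/2))*lam with hu
    have hS : HasDerivAt (fun u : ℝ => ∑ j ∈ Finset.range (k+2),
          ((k+1).factorial : ℝ)/((k+1-j).factorial) * u^(k+1-j))
        (∑ j ∈ Finset.range (k+2),
          ((k+1).factorial : ℝ)/((k+1-j).factorial) * (((k+1-j:ℕ):ℝ) * u^(k+1-j-1))) u :=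
      HasDerivAt.fun_sum fun j _ => (hasDerivAt_pow (k+1-j) u).const_mul _
    have hexp : HasDerivAt (fun u : ℝ => Real.exp (-u)) (Real.exp (-u) * (-1)) u :=
      (hasDerivAt_neg u).exp
    have hG := (((hexp.mul hS).neg).div_const c).comp x hU
    convert hG using 1
    case e'_4 => rfl
    case e'_8 => rfl
    beta_reduce
    rw [aux_sum k u]
    have he : (1 + a*(x - 1/2)) = u / lam := by
      rw [hu, mul_div_cancel_right₀ _ hlne]
    rw [he, hc]
    set S : ℝ := ∑ j ∈ Finset.range (k+2),
      ((k+1).factorial : ℝ)/((k+1-j).factorial) * u^(k+1-j) with hS2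
    clear_value u S
    field_simp
    ring
  case hi =>
    apply Continuous.intervalIntegrable
    fun_prop
  rw [key]
  beta_reduce
  have e1 : 1 + a * ((1:ℝ) - 1/2) = 1 + a/2 := by ring
  have e0 : 1 + a * ((0:ℝ) - 1/2) = 1 - a/2 := by ring
  rw [e1, e0, gFactor]
  rw [Finset.mul_sum, Finset.mul_sum, Finset.mul_sum, Finset.mul_sum]
  rw [show ∀ p q : ℝ, -p/c - (-q/c) = (q - p)/c from fun p q => by ring]
  rw [← Finset.sum_sub_distrib, Finset.sum_div]
  refine Finset.sum_congr rfl fun j hj => ?_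
  have hj' : j ≤ k + 1 := by simpa [Nat.lt_succ_iff] using hj
  have hz : lam ^ (-(j + 1 : ℤ)) = (lam^(j+1))⁻¹ := by
    rw [zpow_neg, show ((j:ℤ)+1) = ((j+1:ℕ):ℤ) by push_cast; ring, zpow_natCast]
  have hE1 : Real.exp (-((1 - a/2)*lam)) = Real.exp (-lam) * Real.exp (lam*a/2) := by
    rw [← Real.exp_add]; congr 1; ring
  have hE2 : Real.exp (-((1 + a/2)*lam)) = Real.exp (-lam) * Real.exp (-(lam*a/2)) := by
    rw [← Real.exp_add]; congr 1; ring
  have hpow : lam^(k+1-j) = lam^k * lam^2 / lam^(j+1) := by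
    rw [eq_div_iff (by positivity), ← pow_add, ← pow_add]
    congr 1
    omega
  rw [hz, hE1, hE2, mul_pow, mul_pow, hpow, hc]
  have hlj : lam^(j+1) ≠ 0 := by positivity
  field_simp
end
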